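/- Let K and K* be gain matrices and define M_* by M_*^[i] := (K − K*)(A − BK*)^i for i ∈ [0, H−1]. Let x_t^K(M_*), u_t^K(M_*) be the state and input under the disturbance-action policy u_t = −K x_t + Σ_{i=1}^H M_*^[i−1] w_{t−i} from x_0 = 0, and let u_t^{K*} = −K* x_t^{K*} be the input under the linear feedback K* from x_0^{K*} = 0, where w_t = 0 for t < 0. Then for every t ∈ [0, H], u_t^K(M_*) = −K* Σ_{i=0}^{t−1} (A − BK*)^i w_{t−1−i} = u_t^{K*}. -/

import Mathlib

open MeasureTheory Finset ProbabilityTheory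

noncomputable section

namespace OnlineControl

abbrev Vec (n : ℕ) := EuclideanSpace ℝ (Fin n)
abbrev Mat (m n : ℕ) := Matrix (Fin m) (Fin n) ℝ
abbrev Param (H nu nx : ℕ) := EuclideanSpace ℝ (Fin H × Fin nu × Fin nx)

/-- A matrix acting on Euclidean vectors. -/
def mulVecE {m n : ℕ} (A : Mat m n) (v : Vec n) : Vec m := Matrix.toEuclideanLin A v

/-- Spectral norm (ℓ²-operator norm) of a real matrix. -/
def spec {m n : ℕ} (A : Mat m n) : ℝ :=
  ‖LinearMap.toContinuousLinearMap (Matrix.toEuclideanLin A)‖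

/-- Spectral norm (ℓ²-operator norm) of a complex matrix. -/
def specC {m n : ℕ} (A : Matrix (Fin m) (Fin n) ℂ) : ℝ :=
  ‖LinearMap.toContinuousLinearMap (Matrix.toEuclideanLin A)‖

/-- `(κ,γ)`-strong stability of a gain `K` for the system `(A, B)`. -/
def StronglyStable {nx nu : ℕ} (A : Mat nx nx) (B : Mat nx nu) (κ γ : ℝ)
    (K : Mat nu nx) : Prop :=
  ∃ P Q : Matrix (Fin nx) (Fin nx) ℂ,
    IsUnit Q ∧ (A - B * K).map (fun a => (a : ℂ)) = Q * P * Q⁻¹ ∧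
    specC P ≤ 1 - γ ∧ spec K ≤ κ ∧ specC Q ≤ κ ∧ specC Q⁻¹ ≤ κ

/-- `(κ,γ)`-diagonal strong stability. -/
def DiagStronglyStable {nx nu : ℕ} (A : Mat nx nx) (B : Mat nx nu) (κ γ : ℝ)
    (K : Mat nu nx) : Prop :=
  ∃ (d : Fin nx → ℂ) (Q : Matrix (Fin nx) (Fin nx) ℂ),
    IsUnit Q ∧ (A - B * K).map (fun a => (a : ℂ)) = Q * Matrix.diagonal d * Q⁻¹ ∧
    specC (Matrix.diagonal d) ≤ 1 - γ ∧ spec K ≤ κ ∧ specC Q ≤ κ ∧ specC Q⁻¹ ≤ κ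

/-- The `i`-th block `M^[i]` of a stacked disturbance-action parameter. -/
def blk {H nu nx : ℕ} (M : Param H nu nx) (i : Fin H) : Mat nu nx :=
  Matrix.of fun p q => M (i, p, q)

/-- The admissible set ℳ of disturbance-action policy parameters. -/
def MM (H nu nx : ℕ) (κB κ γ : ℝ) : Set (Param H nu nx) :=
  {M | ∀ i : Fin H, spec (blk M i) ≤ 2 * κB * κ ^ 3 * (1 - γ) ^ (i : ℕ)}

/-- Disturbance-state transfer matrix `Ψ_{t,i}^{K,h}(M_{t-h:t})`. -/
def Psi {nx nu H : ℕ} (A : Mat nx nx) (B : Mat nx nu) (K : Mat nu nx)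
    (M : ℤ → Param H nu nx) (t : ℤ) (i h : ℕ) : Mat nx nx :=
  (if i ≤ h then (A - B * K) ^ i else 0) +
    ∑ j ∈ Finset.range (h + 1),
      if hij : 1 ≤ i - j ∧ i - j ≤ H then
        (A - B * K) ^ j * B * blk (M (t - j)) ⟨i - j - 1, by omega⟩
      else 0

/-- Surrogate state `y_t^K(M_{t-1-H:t-1})`. -/
def ySur {nx nu H : ℕ} (A : Mat nx nx) (B : Mat nx nu) (K : Mat nu nx)
    (M : ℤ → Param H nu nx) (w : ℤ → Vec nx) (t : ℕ) : Vec nx :=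
  ∑ i ∈ Finset.range (2 * H + 1), mulVecE (Psi A B K M ((t : ℤ) - 1) i H) (w ((t : ℤ) - 1 - i))

/-- Surrogate input `v_t^K(M_{t-1-H:t})`. -/
def vSur {nx nu H : ℕ} (A : Mat nx nx) (B : Mat nx nu) (K : Mat nu nx)
    (M : ℤ → Param H nu nx) (w : ℤ → Vec nx) (t : ℕ) : Vec nu :=
  -(mulVecE K (ySur A B K M w t)) +
    ∑ i : Fin H, mulVecE (blk (M (t : ℤ)) i) (w ((t : ℤ) - 1 - (i : ℕ)))

/-- Surrogate cost `F_t(M_{t-1-H:t})`. -/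
def Fcost {nx nu H : ℕ} (c : ℕ → Vec nx → Vec nu → ℝ) (A : Mat nx nx) (B : Mat nx nu)
    (K : Mat nu nx) (M : ℤ → Param H nu nx) (w : ℤ → Vec nx) (t : ℕ) : ℝ :=
  c t (ySur A B K M w t) (vSur A B K M w t)

/-- `f_t(M) := F_t(M,…,M)`, as a function of the stacked parameter `M`. -/
def fcost {nx nu H : ℕ} (c : ℕ → Vec nx → Vec nu → ℝ) (A : Mat nx nx) (B : Mat nx nu)
    (K : Mat nu nx) (w : ℤ → Vec nx) (t : ℕ) : Param H nu nx → ℝ :=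
  fun M => Fcost c A B K (fun _ => M) w t

/-- The control input chosen by the disturbance-action policy `π_t(K, M_t)` at state `x`. -/
def dapCtrl {nx nu H : ℕ} (K : Mat nu nx) (M : ℤ → Param H nu nx) (w : ℤ → Vec nx)
    (t : ℕ) (x : Vec nx) : Vec nu :=
  -(mulVecE K x) + ∑ i : Fin H, mulVecE (blk (M (t : ℤ)) i) (w ((t : ℤ) - 1 - (i : ℕ)))

/-- The state trajectory generated by the disturbance-action policies from `x₀ = 0`. -/
def dapState {nx nu H : ℕ} (A : Mat nx nx) (B : Mat nx nu) (K : Mat nu nx)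
    (M : ℤ → Param H nu nx) (w : ℤ → Vec nx) : ℕ → Vec nx
  | 0 => 0
  | t + 1 =>
      mulVecE A (dapState A B K M w t) +
        mulVecE B (dapCtrl K M w t (dapState A B K M w t)) + w (t : ℤ)

/-- The input trajectory generated by the disturbance-action policies. -/
def dapInput {nx nu H : ℕ} (A : Mat nx nx) (B : Mat nx nu) (K : Mat nu nx)
    (M : ℤ → Param H nu nx) (w : ℤ → Vec nx) (t : ℕ) : Vec nu :=
  dapCtrl K M w t (dapState A B K M w t)

/-- The closed-loop state trajectory under the linear feedback `u_t = -K x_t` from `x₀ = 0`. -/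
def cls {nx nu : ℕ} (A : Mat nx nx) (B : Mat nx nu) (K : Mat nu nx)
    (w : ℤ → Vec nx) : ℕ → Vec nx
  | 0 => 0
  | t + 1 => mulVecE (A - B * K) (cls A B K w t) + w (t : ℤ)

/-- Frobenius norm of the Hessian of `f` at `x`, via second directional derivatives along
coordinate directions. -/
def hessFrob {ι : Type} [Fintype ι] [DecidableEq ι] (f : EuclideanSpace ℝ ι → ℝ)
    (x : EuclideanSpace ℝ ι) : ℝ :=
  Real.sqrt (∑ a, ∑ b,
    (iteratedFDeriv ℝ 2 f x ![EuclideanSpace.single a 1, EuclideanSpace.single b 1]) ^ 2)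

/-- Assumption 1: the costs are convex and differentiable with gradients bounded as
`‖∇_x c_t(x,u)‖ ≤ G_c ‖x‖`, `‖∇_u c_t(x,u)‖ ≤ G_c ‖u‖`, for `t ∈ ⟦0, T-1⟧`. -/
def Assumption1 {nx nu : ℕ} (c : ℕ → Vec nx → Vec nu → ℝ) (Gc : ℝ) (T : ℕ) : Prop :=
  1 ≤ Gc ∧ ∀ t < T,
    ConvexOn ℝ Set.univ (fun p : Vec nx × Vec nu => c t p.1 p.2) ∧
    Differentiable ℝ (fun p : Vec nx × Vec nu => c t p.1 p.2) ∧
    ∀ (x : Vec nx) (u : Vec nu),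
      ‖gradient (fun x' => c t x' u) x‖ ≤ Gc * ‖x‖ ∧
      ‖gradient (fun u' => c t x u') u‖ ≤ Gc * ‖u‖

/-- Assumption 2-(i): `E[‖w_t‖] ≤ σ_w` for all `t ≥ 0`. -/
def NoiseMoment1 {Ω : Type} [MeasurableSpace Ω] (μ : Measure Ω) {nx : ℕ}
    (w : ℤ → Ω → Vec nx) (σw : ℝ) : Prop :=
  0 ≤ σw ∧ ∀ t : ℤ, 0 ≤ t → (∫⁻ ω, (‖w t ω‖₊ : ENNReal) ∂μ) ≤ ENNReal.ofReal σw

/-- Assumption 2-(ii): `E[‖w_t‖⁴] ≤ σ_w⁴` for all `t ≥ 0`. -/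
def NoiseMoment4 {Ω : Type} [MeasurableSpace Ω] (μ : Measure Ω) {nx : ℕ}
    (w : ℤ → Ω → Vec nx) (σw : ℝ) : Prop :=
  0 ≤ σw ∧ ∀ t : ℤ, 0 ≤ t → (∫⁻ ω, (‖w t ω‖₊ : ENNReal) ^ 4 ∂μ) ≤ ENNReal.ofReal (σw ^ 4)

/-- Assumption 3: the costs are twice differentiable with `α I ⪯ ∇² c_t ⪯ β I`
for `t ∈ ⟦0, T-1⟧`. -/
def Assumption3 {nx nu : ℕ} (c : ℕ → Vec nx → Vec nu → ℝ) (α β : ℝ) (T : ℕ) : Prop :=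
  0 < α ∧ 0 < β ∧ ∀ t < T,
    ContDiff ℝ 2 (fun p : Vec nx × Vec nu => c t p.1 p.2) ∧
    ∀ (x : Vec nx) (u : Vec nu) (v : Vec nx × Vec nu),
      α * (‖v.1‖ ^ 2 + ‖v.2‖ ^ 2) ≤
          iteratedFDeriv ℝ 2 (fun p : Vec nx × Vec nu => c t p.1 p.2) (x, u) ![v, v] ∧
      iteratedFDeriv ℝ 2 (fun p : Vec nx × Vec nu => c t p.1 p.2) (x, u) ![v, v] ≤
          β * (‖v.1‖ ^ 2 + ‖v.2‖ ^ 2)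

/-- Assumption 4: `{w_t}_{t≥0}` is independent, zero-mean, coordinatewise `σ_w`-sub-Gaussian,
and non-degenerate: `E[w_t w_tᵀ] ⪰ σ̲² I`. -/
def Assumption4 {Ω : Type} [MeasurableSpace Ω] (μ : Measure Ω) {nx : ℕ}
    (w : ℤ → Ω → Vec nx) (σw σl : ℝ) : Prop :=
  0 ≤ σw ∧
  iIndepFun (fun t : ℕ => w t) μ ∧
  (∀ t : ℤ, 0 ≤ t → Integrable (w t) μ ∧ (∫ ω, w t ω ∂μ) = 0) ∧
  (∀ t : ℤ, 0 ≤ t → ∀ i : Fin nx, ∀ l : ℝ,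
    (∫⁻ ω, ENNReal.ofReal (Real.exp (l * w t ω i)) ∂μ) ≤
      ENNReal.ofReal (Real.exp (l ^ 2 * σw ^ 2 / (2 * nx)))) ∧
  0 < σl ∧
  (∀ t : ℤ, 0 ≤ t → ∀ v : Vec nx,
    ENNReal.ofReal (σl ^ 2 * ‖v‖ ^ 2) ≤
      ∫⁻ ω, ENNReal.ofReal ((inner ℝ (w t ω) v : ℝ) ^ 2) ∂μ)

end OnlineControl

open OnlineControl


section Helpers

lemma mulVecE_mul {m n k : ℕ} (A : Mat m n) (B : Mat n k) (v : Vec k) :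
    mulVecE (A * B) v = mulVecE A (mulVecE B v) := by
  simp [mulVecE, Matrix.toEuclideanLin_apply, Matrix.mulVec_mulVec]

lemma mulVecE_sub {m n : ℕ} (A B : Mat m n) (v : Vec n) :
    mulVecE (A - B) v = mulVecE A v - mulVecE B v := by
  simp [mulVecE, map_sub, LinearMap.sub_apply]

lemma mulVecE_add_mat {m n : ℕ} (A B : Mat m n) (v : Vec n) :
    mulVecE (A + B) v = mulVecE A v + mulVecE B v := by
  simp [mulVecE, map_add, LinearMap.add_apply]

lemma mulVecE_addv {m n : ℕ} (A : Mat m n) (x y : Vec n) :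
    mulVecE A (x + y) = mulVecE A x + mulVecE A y :=
  map_add (Matrix.toEuclideanLin A) x y

lemma mulVecE_negv {m n : ℕ} (A : Mat m n) (x : Vec n) :
    mulVecE A (-x) = -(mulVecE A x) :=
  map_neg (Matrix.toEuclideanLin A) x

lemma mulVecE_one {n : ℕ} (v : Vec n) : mulVecE (1 : Mat n n) v = v := by
  simp [mulVecE, Matrix.toEuclideanLin_apply]

lemma mulVecE_zero_vec {m n : ℕ} (A : Mat m n) : mulVecE A (0 : Vec n) = 0 :=
  map_zero (Matrix.toEuclideanLin A)

lemma mulVecE_sum {m n : ℕ} (A : Mat m n) {ι : Type*} (s : Finset ι) (f : ι → Vec n) :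
    mulVecE A (∑ i ∈ s, f i) = ∑ i ∈ s, mulVecE A (f i) :=
  map_sum (Matrix.toEuclideanLin A) f s

lemma cls_eq_sum {nx nu : ℕ} (A : Mat nx nx) (B : Mat nx nu) (Kstar : Mat nu nx)
    (w : ℤ → Vec nx) :
    ∀ t : ℕ, cls A B Kstar w t =
      ∑ i ∈ Finset.range t, mulVecE ((A - B * Kstar) ^ i) (w ((t : ℤ) - 1 - i)) := by
  intro t
  induction t with
  | zero => simp [cls]
  | succ t ih =>
    rw [Finset.sum_range_succ']
    show mulVecE (A - B * Kstar) (cls A B Kstar w t) + w (t : ℤ) = _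
    rw [ih, mulVecE_sum]
    congr 1
    · apply Finset.sum_congr rfl
      intro i _
      rw [← mulVecE_mul, ← pow_succ']
      have : ((t : ℤ) + 1 - 1 - ((i : ℤ) + 1)) = (t : ℤ) - 1 - i := by ring
      push_cast
      rw [this]
    · rw [pow_zero, mulVecE_one]
      have : ((t : ℤ) + 1 - 1 - 0) = (t : ℤ) := by ring
      push_cast
      rw [this]

lemma finsum_eq {nx nu H : ℕ} (A : Mat nx nx) (B : Mat nx nu) (K Kstar : Mat nu nx)
    (w : ℤ → Vec nx) (Mstar : Param H nu nx)
    (hw0 : ∀ s : ℤ, s < 0 → w s = 0)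
    (hMstar : ∀ i : Fin H, blk Mstar i = (K - Kstar) * (A - B * Kstar) ^ (i : ℕ))
    (t : ℕ) (ht : t ≤ H) :
    ∑ i : Fin H, mulVecE (blk Mstar i) (w ((t : ℤ) - 1 - (i : ℕ))) =
      mulVecE (K - Kstar)
        (∑ i ∈ Finset.range t, mulVecE ((A - B * Kstar) ^ i) (w ((t : ℤ) - 1 - i))) := by
  rw [mulVecE_sum]
  have : ∑ i : Fin H, mulVecE (blk Mstar i) (w ((t : ℤ) - 1 - (i : ℕ))) =
      ∑ i ∈ Finset.range H,
        mulVecE ((K - Kstar) * (A - B * Kstar) ^ i) (w ((t : ℤ) - 1 - i)) := by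
    rw [Finset.sum_range fun i =>
      mulVecE ((K - Kstar) * (A - B * Kstar) ^ i) (w ((t : ℤ) - 1 - i))]
    apply Finset.sum_congr rfl
    intro i _
    rw [hMstar i]
  rw [this]
  rw [← Finset.sum_subset (Finset.range_subset_range.mpr ht)]
  · apply Finset.sum_congr rfl
    intro i _
    rw [mulVecE_mul]
  · intro i _ hi
    rw [Finset.mem_range, not_lt] at hi
    have : w ((t : ℤ) - 1 - i) = 0 := by
      apply hw0; omega
    rw [this, mulVecE_zero_vec]

lemma dapState_eq_cls {nx nu H : ℕ} (A : Mat nx nx) (B : Mat nx nu) (K Kstar : Mat nu nx)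
    (w : ℤ → Vec nx) (Mstar : Param H nu nx)
    (hw0 : ∀ s : ℤ, s < 0 → w s = 0)
    (hMstar : ∀ i : Fin H, blk Mstar i = (K - Kstar) * (A - B * Kstar) ^ (i : ℕ)) :
    ∀ t : ℕ, t ≤ H →
      dapState A B K (fun _ => Mstar) w t = cls A B Kstar w t := by
  intro t
  induction t with
  | zero => intro _; rfl
  | succ t ih =>
    intro ht
    have ht' : t ≤ H := Nat.le_of_succ_le ht
    have ihe := ih ht'
    show mulVecE A (dapState A B K (fun _ => Mstar) w t) +
        mulVecE B (dapCtrl K (fun _ => Mstar) w t (dapState A B K (fun _ => Mstar) w t)) +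
        w (t : ℤ) = _
    rw [ihe]
    unfold dapCtrl
    rw [finsum_eq A B K Kstar w Mstar hw0 hMstar t ht', ← cls_eq_sum]
    show _ = mulVecE (A - B * Kstar) (cls A B Kstar w t) + w (t : ℤ)
    set x := cls A B Kstar w t
    rw [mulVecE_addv, mulVecE_negv, ← mulVecE_mul, ← mulVecE_mul]
    have hmat : A - B * Kstar = (A - B * K) + B * (K - Kstar) := by
      rw [Matrix.mul_sub]; abel
    rw [hmat, mulVecE_add_mat, mulVecE_sub]
    abel

end Helpers

/-- for `t ≤ H`, the disturbance-action policy with parameter `M_*`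
reproduces the linear feedback `u_t = -K* x_t`. -/
theorem dap_input_eq_linear_feedback
    {nx nu H : ℕ} (A : Mat nx nx) (B : Mat nx nu) (K Kstar : Mat nu nx)
    (w : ℤ → Vec nx) (Mstar : Param H nu nx)
    (hw0 : ∀ s : ℤ, s < 0 → w s = 0)
    (hMstar : ∀ i : Fin H, blk Mstar i = (K - Kstar) * (A - B * Kstar) ^ (i : ℕ)) :
    ∀ t : ℕ, t ≤ H →
      dapInput A B K (fun _ => Mstar) w t =
        -(mulVecE Kstar
            (∑ i ∈ Finset.range t, mulVecE ((A - B * Kstar) ^ i) (w ((t : ℤ) - 1 - i)))) ∧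
      dapInput A B K (fun _ => Mstar) w t = -(mulVecE Kstar (cls A B Kstar w t)) := by
  intro t ht
  have hx := dapState_eq_cls A B K Kstar w Mstar hw0 hMstar t ht
  have hcls := cls_eq_sum A B Kstar w t
  have hu : dapInput A B K (fun _ => Mstar) w t = -(mulVecE Kstar (cls A B Kstar w t)) := by
    unfold dapInput dapCtrl
    rw [hx, finsum_eq A B K Kstar w Mstar hw0 hMstar t ht, ← hcls, mulVecE_sub]
    abel
  exact ⟨by rw [hu, hcls], hu⟩
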